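/- Let α ≥ 0 and σ > 0, and set γ = √(α² + 2σ²) and c₁ = arctanh(−α/γ) (well-defined since γ > α ≥ 0). Define B : [0, ∞) → ℝ by B(t) = (1/σ²)·(α + γ·tanh(−(1/2)γt + c₁)). Then B(0) = 0 and B is differentiable with B'(t) = (1/2)σ²·B(t)² − α·B(t) − 1 for every t ≥ 0. -/

import Mathlib

private lemma hasDerivAt_tanh' (x : ℝ) :
    HasDerivAt Real.tanh (1 - Real.tanh x ^ 2) x := by
  have hc := (Real.cosh_pos x).ne'
  have h : HasDerivAt (fun y => Real.sinh y / Real.cosh y)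
      ((Real.cosh x * Real.cosh x - Real.sinh x * Real.sinh x) / Real.cosh x ^ 2) x :=
    (Real.hasDerivAt_sinh x).div (Real.hasDerivAt_cosh x) hc
  have hf : Real.tanh = fun y => Real.sinh y / Real.cosh y :=
    funext fun y => Real.tanh_eq_sinh_div_cosh y
  rw [hf]
  convert h using 1
  field_simp

private lemma tanh_half_log (r : ℝ) (hr : 0 < r) :
    Real.tanh ((1 / 2) * Real.log r) = (r - 1) / (r + 1) := by
  set s := Real.exp ((1 / 2) * Real.log r) with hs
  have hs0 : 0 < s := Real.exp_pos _
  have hs2 : s ^ 2 = r := by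
    rw [hs, ← Real.exp_nat_mul]
    rw [show (2:ℕ) * ((1:ℝ)/2 * Real.log r) = Real.log r by push_cast; ring, Real.exp_log hr]
  have hss : s + s⁻¹ ≠ 0 := by positivity
  rw [Real.tanh_eq_sinh_div_cosh, Real.sinh_eq, Real.cosh_eq, Real.exp_neg, ← hs]
  have h1 : (s - s⁻¹) / 2 / ((s + s⁻¹) / 2) = (s ^ 2 - 1) / (s ^ 2 + 1) := by
    rw [div_div_div_eq]
    field_simp
  rw [h1, hs2]

/-- Riccati ODE for the exponent `B` in the closed-form large-pool loss (no-feedback case).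
Here `c₁ = arctanh(−α/γ)` is written via `arctanh y = (1/2) log((1+y)/(1−y))`. -/
theorem riccati_B (α σ : ℝ) (hα : 0 ≤ α) (hσ : 0 < σ)
    (γ c₁ : ℝ) (hγ : γ = Real.sqrt (α ^ 2 + 2 * σ ^ 2))
    (hc₁ : c₁ = (1 / 2) * Real.log ((1 + -α / γ) / (1 - -α / γ)))
    (B : ℝ → ℝ)
    (hB : ∀ t : ℝ, B t = (1 / σ ^ 2) * (α + γ * Real.tanh (-(1 / 2) * γ * t + c₁))) :
    B 0 = 0 ∧ ∀ t : ℝ, 0 ≤ t →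
      HasDerivAt B ((1 / 2) * σ ^ 2 * (B t) ^ 2 - α * B t - 1) t := by
  have hγα : α < γ := by
    rw [hγ]
    have h : α = Real.sqrt (α ^ 2) := by rw [Real.sqrt_sq hα]
    nth_rewrite 1 [h]
    apply Real.sqrt_lt_sqrt (by positivity)
    nlinarith
  have hγ0 : 0 < γ := lt_of_le_of_lt hα hγα
  have hγsq : γ ^ 2 = α ^ 2 + 2 * σ ^ 2 := by
    rw [hγ]; exact Real.sq_sqrt (by positivity)
  have hσ2 : (σ ^ 2 : ℝ) ≠ 0 := by positivity
  have hy1 : (0:ℝ) < 1 + -α / γ := by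
    have : α / γ < 1 := (div_lt_one hγ0).mpr hγα
    simp only [neg_div]; linarith
  have hy2 : (0:ℝ) < 1 - -α / γ := by
    have : 0 ≤ α / γ := div_nonneg hα hγ0.le
    simp only [neg_div]; linarith
  have hr : (0:ℝ) < (1 + -α / γ) / (1 - -α / γ) := div_pos hy1 hy2
  have htanhc : Real.tanh c₁ = -α / γ := by
    rw [hc₁, tanh_half_log _ hr]
    rw [div_eq_div_iff (by positivity) (by positivity)]
    field_simp [hγ0.ne', (add_pos_of_pos_of_nonneg hγ0 hα).ne']
    all_goals ring
  have hB0 : B 0 = 0 := by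
    rw [hB 0]
    rw [show -(1/2) * γ * (0:ℝ) + c₁ = c₁ by ring, htanhc]
    have : γ * (-α / γ) = -α := by field_simp
    rw [this]
    ring
  refine ⟨hB0, fun t _ => ?_⟩
  have hBfun : B = fun t => (1 / σ ^ 2) * (α + γ * Real.tanh (-(1 / 2) * γ * t + c₁)) :=
    funext hB
  have hdu : HasDerivAt (fun s : ℝ => -(1 / 2) * γ * s + c₁) (-(1 / 2) * γ) t := by
    simpa using ((hasDerivAt_id t).const_mul (-(1 / 2) * γ)).add_const c₁
  have hdtanh : HasDerivAt (fun s => Real.tanh (-(1 / 2) * γ * s + c₁))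
      ((1 - Real.tanh (-(1 / 2) * γ * t + c₁) ^ 2) * (-(1 / 2) * γ)) t :=
    (hasDerivAt_tanh' _).comp t hdu
  have hd : HasDerivAt B
      ((1 / σ ^ 2) * (γ * ((1 - Real.tanh (-(1 / 2) * γ * t + c₁) ^ 2) * (-(1 / 2) * γ)))) t := by
    rw [hBfun]
    exact ((hdtanh.const_mul γ).const_add α).const_mul (1 / σ ^ 2)
  convert hd using 1
  rw [hB t]
  set T := Real.tanh (-(1 / 2) * γ * t + c₁)
  field_simp
  ring_nf
  linear_combination hγsq
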